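/- A locally compact Polish group G is strongly NSS if and only if it is NSS. -/

import Mathlib

open Filter Topology

/-- In a T2 topological group, a nonempty compact set closed under multiplication
contains `1` and is closed under inversion. -/
lemma compact_semigroup_subgroup {G : Type*} [Group G] [TopologicalSpace G]
    [IsTopologicalGroup G] [T2Space G] {S : Set G} (hS : IsCompact S) (hne : S.Nonempty)
    (hmul : ∀ x ∈ S, ∀ y ∈ S, x * y ∈ S) :
    (1 : G) ∈ S ∧ ∀ a ∈ S, a⁻¹ ∈ S := by
  have key : ∀ a ∈ S, (1 : G) ∈ closure {x | ∃ n : ℕ, 2 ≤ n ∧ a ^ n = x} ∧ a⁻¹ ∈ S := by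
    intro a ha
    set M : Set G := {x | ∃ n : ℕ, 2 ≤ n ∧ a ^ n = x} with hM
    have hpow : ∀ n : ℕ, 1 ≤ n → a ^ n ∈ S := by
      intro n hn
      induction n with
      | zero => omega
      | succ n ih =>
        rcases Nat.eq_zero_or_pos n with h | h
        · subst h; simpa using ha
        · rw [pow_succ]; exact hmul _ (ih h) _ ha
    have hMS : M ⊆ S := by rintro x ⟨n, hn, rfl⟩; exact hpow n (by omega)
    have hclM : closure M ⊆ S := closure_minimal hMS hS.isClosed
    have hcomp : IsCompact (closure M) := hS.of_isClosed_subset isClosed_closure hclM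
    have hMmul : ∀ x ∈ closure M, ∀ y ∈ closure M, x * y ∈ closure M := by
      intro x hx y hy
      refine map_mem_closure₂ continuous_mul hx hy ?_
      rintro _ ⟨n, hn, rfl⟩ _ ⟨m, hm, rfl⟩
      exact ⟨n + m, by omega, pow_add a n m⟩
    obtain ⟨e, heM, he⟩ := exists_idempotent_in_compact_subsemigroup
      (fun r => continuous_mul_right r) (closure M)
      ⟨a ^ 2, subset_closure ⟨2, le_refl 2, rfl⟩⟩ hcomp hMmul
    have he1 : e = 1 := mul_eq_left.mp he
    subst he1
    refine ⟨heM, ?_⟩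
    have : a⁻¹ * 1 ∈ closure ((a⁻¹ * ·) '' M) :=
      map_mem_closure (continuous_mul_left a⁻¹) heM (Set.mapsTo_image _ _)
    have himg : (a⁻¹ * ·) '' M ⊆ S := by
      rintro _ ⟨_, ⟨n, hn, rfl⟩, rfl⟩
      obtain ⟨m, rfl⟩ : ∃ m, n = m + 1 := ⟨n - 1, by omega⟩
      have : a⁻¹ * a ^ (m + 1) = a ^ m := by
        rw [pow_succ']; exact inv_mul_cancel_left a (a ^ m)
      show a⁻¹ * a ^ (m+1) ∈ S
      rw [this]
      exact hpow m (by omega)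
    have := (closure_minimal himg hS.isClosed) this
    simpa using this
  obtain ⟨a, ha⟩ := hne
  obtain ⟨h1, _⟩ := key a ha
  have hMS : closure {x | ∃ n : ℕ, 2 ≤ n ∧ a ^ n = x} ⊆ S := by
    refine closure_minimal ?_ hS.isClosed
    rintro x ⟨n, hn, rfl⟩
    clear h1
    induction n with
    | zero => omega
    | succ n ih =>
      rcases Nat.eq_zero_or_pos n with h | h
      · omega
      · rcases Nat.eq_or_lt_of_le h with h' | h'
        · rw [← h']; rw [pow_succ, pow_one]; exact hmul _ ha _ ha
        · rw [pow_succ]; exact hmul _ (ih (by omega)) _ ha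
  exact ⟨hMS h1, fun b hb => (key b hb).2⟩


/-- `V` is an unenclosed set of `G`. -/
def Unenclosed (G : Type*) [Group G] [TopologicalSpace G] (V : Set G) : Prop :=
  IsOpen V ∧ (1 : G) ∈ V ∧
    ∀ g : ℕ → G, ¬ Tendsto g atTop (𝓝 1) →
      ∃ (k : ℕ) (n : Fin (k + 1) → ℕ), StrictMono n ∧ (List.ofFn (g ∘ n)).prod ∉ V

/-- `G` is strongly NSS if it has an unenclosed set. -/
def StronglyNSS (G : Type*) [Group G] [TopologicalSpace G] : Prop :=
  ∃ V : Set G, Unenclosed G V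

/-- `G` is NSS: some open neighborhood of the identity contains no non-trivial subgroup. -/
def NSS (G : Type*) [Group G] [TopologicalSpace G] : Prop :=
  ∃ V : Set G, IsOpen V ∧ (1 : G) ∈ V ∧ ∀ K : Subgroup G, (K : Set G) ⊆ V → K = ⊥

/-- A locally compact Polish group is strongly NSS iff it is NSS. -/
theorem stmt_5 (G : Type*) [Group G] [TopologicalSpace G] [IsTopologicalGroup G]
    [PolishSpace G] [LocallyCompactSpace G] :
    StronglyNSS G ↔ NSS G := by
  constructor
  · rintro ⟨V, hVopen, hV1, hVprod⟩
    refine ⟨V, hVopen, hV1, ?_⟩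
    intro K hK
    by_contra hKne
    obtain ⟨a, haK, hane⟩ : ∃ a ∈ K, a ≠ 1 := by
      by_contra hno
      push_neg at hno
      exact hKne ((Subgroup.eq_bot_iff_forall K).mpr hno)
    have hnt : ¬ Tendsto (fun _ : ℕ => a) atTop (𝓝 (1 : G)) := fun h =>
      hane (tendsto_nhds_unique tendsto_const_nhds h)
    obtain ⟨k, n, _, hprod⟩ := hVprod _ hnt
    refine hprod (hK ?_)
    have : (List.ofFn ((fun _ : ℕ => a) ∘ n)) = List.replicate (k + 1) a :=
      List.ofFn_const _ _
    rw [this, List.prod_replicate]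
    exact pow_mem haK _
  · rintro ⟨W, hWopen, hW1, hW⟩
    obtain ⟨C, hC_nhds, hCW, hC_comp⟩ := local_compact_nhds (hWopen.mem_nhds hW1)
    set V := interior C with hVdef
    have hVopen : IsOpen V := isOpen_interior
    have hV1 : (1 : G) ∈ V := mem_interior_iff_mem_nhds.mpr hC_nhds
    have hclVC : closure V ⊆ C := closure_minimal interior_subset hC_comp.isClosed
    have hclVcomp : IsCompact (closure V) :=
      hC_comp.of_isClosed_subset isClosed_closure hclVC
    have hclVW : closure V ⊆ W := hclVC.trans hCW
    refine ⟨V, hVopen, hV1, ?_⟩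
    intro g hg
    by_contra hcon
    push_neg at hcon
    -- hcon : ∀ k n, StrictMono n → (List.ofFn (g ∘ n)).prod ∈ V
    obtain ⟨s, hs, hfreq⟩ := not_tendsto_iff_exists_frequently_notMem.mp hg
    have hinf : {n : ℕ | g n ∉ s}.Infinite := Nat.frequently_atTop_iff_infinite.mp hfreq
    set mseq : ℕ → ℕ := Nat.nth (fun n => g n ∉ s) with hmseq
    have hmseq_mono : StrictMono mseq := Nat.nth_strictMono hinf
    have hmseq_mem : ∀ j, g (mseq j) ∉ s := fun j => Nat.nth_mem_of_infinite hinf j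
    set h : ℕ → G := g ∘ mseq with hh
    set P : ℕ → Set G := fun m =>
      {x | ∃ l : List ℕ, l ≠ [] ∧ l.Pairwise (· < ·) ∧ (∀ i ∈ l, m ≤ i) ∧ (l.map h).prod = x}
      with hP
    -- every element of P m is a subproduct of g, hence in V
    have hPV : ∀ m, P m ⊆ V := by
      rintro m x ⟨l, hlne, hlpw, -, rfl⟩
      obtain ⟨a, t, rfl⟩ := List.exists_cons_of_ne_nil hlne
      have hsm : StrictMono (fun i : Fin (t.length + 1) => mseq ((a :: t).get i)) := by
        intro i j hij
        exact hmseq_mono (List.pairwise_iff_get.mp hlpw i j hij)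
      have := hcon t.length _ hsm
      have heq : List.ofFn (g ∘ fun i : Fin (t.length + 1) => mseq ((a :: t).get i))
          = (a :: t).map h := by
        have h1 : (g ∘ fun i : Fin (t.length + 1) => mseq ((a :: t).get i))
            = h ∘ (a :: t).get := rfl
        rw [h1, ← List.map_ofFn, List.ofFn_get]
      rwa [heq] at this
    have hmemP : ∀ m, h m ∈ P m := by
      intro m
      exact ⟨[m], by simp, by simp, by simp, by simp⟩
    -- the set A
    set A : Set G := ⋂ m, closure (P m) with hA
    have hPanti : ∀ {m m' : ℕ}, m ≤ m' → P m' ⊆ P m := by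
      intro m m' hmm x ⟨l, h1, h2, h3, h4⟩
      exact ⟨l, h1, h2, fun i hi => le_trans hmm (h3 i hi), h4⟩
    have hclPV : ∀ m, closure (P m) ⊆ closure V := fun m =>
      closure_mono (hPV m)
    have hAne : A.Nonempty := by
      apply IsCompact.nonempty_iInter_of_sequence_nonempty_isCompact_isClosed
        (t := fun m => closure (P m))
      · exact fun m => closure_mono (hPanti (Nat.le_succ m))
      · exact fun m => ⟨h m, subset_closure (hmemP m)⟩
      · exact hclVcomp.of_isClosed_subset isClosed_closure (hclPV 0)
      · exact fun m => isClosed_closure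
    have hAsub : A ⊆ closure V := fun x hx => hclPV 0 (Set.mem_iInter.mp hx 0)
    have hAcomp : IsCompact A :=
      hclVcomp.of_isClosed_subset (isClosed_iInter fun _ => isClosed_closure) hAsub
    -- A is closed under multiplication
    have hAmul : ∀ x ∈ A, ∀ y ∈ A, x * y ∈ A := by
      intro x hx y hy
      rw [hA, Set.mem_iInter]
      intro m
      rw [mem_closure_iff_nhds]
      intro U hU
      have hmul_cont : Tendsto (fun p : G × G => p.1 * p.2) (𝓝 x ×ˢ 𝓝 y) (𝓝 (x * y)) := by
        rw [← nhds_prod_eq]; exact continuous_mul.tendsto (x, y)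
      obtain ⟨U1, hU1, U2, hU2, hU12⟩ := mem_prod_iff.mp (hmul_cont hU)
      have hxm : x ∈ closure (P m) := Set.mem_iInter.mp hx m
      obtain ⟨p, hpU1, hpP⟩ := (mem_closure_iff_nhds.mp hxm) U1 hU1
      obtain ⟨l, hlne, hlpw, hlge, hlprod⟩ := hpP
      set N : ℕ := l.foldr max 0 with hN
      have hle : ∀ i ∈ l, i ≤ N := fun i hi => List.le_max_of_le hi le_rfl
      have hym : y ∈ closure (P (N + 1)) := Set.mem_iInter.mp hy (N + 1)
      obtain ⟨q, hqU2, hqP⟩ := (mem_closure_iff_nhds.mp hym) U2 hU2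
      obtain ⟨l', hlne', hlpw', hlge', hlprod'⟩ := hqP
      refine ⟨p * q, hU12 (Set.mk_mem_prod hpU1 hqU2), ⟨l ++ l', ?_, ?_, ?_, ?_⟩⟩
      · simp [hlne]
      · rw [List.pairwise_append]
        exact ⟨hlpw, hlpw', fun i hi j hj => lt_of_le_of_lt (hle i hi)
          (Nat.lt_of_succ_le (hlge' j hj))⟩
      · intro i hi
        rcases List.mem_append.mp hi with hi | hi
        · exact hlge i hi
        · obtain ⟨i0, hi0⟩ := List.exists_mem_of_ne_nil l hlne
          exact le_trans (hlge i0 hi0) (le_trans (le_trans (hle i0 hi0) (Nat.le_succ N))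
            (hlge' i hi))
      · rw [List.map_append, List.prod_append, hlprod, hlprod']
    -- A is a subgroup contained in W, hence trivial
    obtain ⟨hA1, hAinv⟩ := compact_semigroup_subgroup hAcomp hAne hAmul
    set K : Subgroup G :=
      { carrier := A
        one_mem' := hA1
        mul_mem' := fun hx hy => hAmul _ hx _ hy
        inv_mem' := fun hx => hAinv _ hx } with hK
    have hKbot : K = ⊥ := hW K (fun x hx => hclVW (hAsub hx))
    have hAtriv : ∀ x ∈ A, x = 1 := by
      intro x hx
      have : x ∈ K := hx
      rw [hKbot, Subgroup.mem_bot] at this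
      exact this
    -- cluster point of h lies in A but also avoids s
    have hne_bot : (map h atTop).NeBot := map_neBot
    have hle : map h atTop ≤ 𝓟 (closure V) := by
      rw [le_principal_iff, mem_map]
      exact univ_mem' fun j => subset_closure (hPV j (hmemP j))
    obtain ⟨x, hxV, hx⟩ := hclVcomp.exists_clusterPt hle
    have hxmem : ∀ m, x ∈ closure (P m) := by
      intro m
      rw [mem_closure_iff_clusterPt]
      refine hx.mono (le_principal_iff.mpr ?_)
      rw [mem_map]
      filter_upwards [eventually_ge_atTop m] with j hj
      exact hPanti hj (hmemP j)
    have hx1 : x = 1 := hAtriv x (Set.mem_iInter.mpr hxmem)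
    have hxs : x ∈ closure {y | ∃ j, h j = y} := by
      rw [mem_closure_iff_clusterPt]
      refine hx.mono (le_principal_iff.mpr ?_)
      rw [mem_map]
      exact univ_mem' fun j => ⟨j, rfl⟩
    have hsub : {y | ∃ j, h j = y} ⊆ sᶜ := by
      rintro y ⟨j, rfl⟩
      exact hmseq_mem j
    have : x ∈ (interior s)ᶜ := by
      have := (closure_mono hsub) hxs
      rwa [closure_compl] at this
    exact this (hx1 ▸ mem_interior_iff_mem_nhds.mpr hs)
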